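/- If the left adjoint action ad of a braided Hopf algebra H is braided cocommutative, i.e. (ad ⊗ id) ∘ (id ⊗ c_{H,H}) ∘ (Δ ⊗ id) = c_{H,H}^{-1} ∘ (id ⊗ ad) ∘ (Δ ⊗ id), then ad intertwines the antipode: S ∘ ad = ad ∘ (id_H ⊗ S). -/

import Mathlib

open CategoryTheory MonoidalCategory

universe v u

/-- A braided Hopf algebra (Hopf monoid) in a braided monoidal category:
an object `H` with product, unit, coproduct, counit, and antipode satisfying
the standard braided Hopf algebra axioms. -/
structure BraidedHopfAlgebra (C : Type u) [Category.{v} C] [MonoidalCategory C]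
    [BraidedCategory C] where
  H : C
  mul : H ⊗ H ⟶ H
  unit : 𝟙_ C ⟶ H
  comul : H ⟶ H ⊗ H
  counit : H ⟶ 𝟙_ C
  antipode : H ⟶ H
  mul_assoc : (mul ⊗ₘ 𝟙 H) ≫ mul = (α_ H H H).hom ≫ (𝟙 H ⊗ₘ mul) ≫ mul
  unit_left : (unit ⊗ₘ 𝟙 H) ≫ mul = (λ_ H).hom
  unit_right : (𝟙 H ⊗ₘ unit) ≫ mul = (ρ_ H).hom
  comul_coassoc : comul ≫ (comul ⊗ₘ 𝟙 H) = comul ≫ (𝟙 H ⊗ₘ comul) ≫ (α_ H H H).inv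
  counit_left : comul ≫ (counit ⊗ₘ 𝟙 H) = (λ_ H).inv
  counit_right : comul ≫ (𝟙 H ⊗ₘ counit) = (ρ_ H).inv
  mul_comul : mul ≫ comul =
    (comul ⊗ₘ comul) ≫ (α_ H H (H ⊗ H)).hom ≫ (𝟙 H ⊗ₘ (α_ H H H).inv) ≫
      (𝟙 H ⊗ₘ ((β_ H H).hom ⊗ₘ 𝟙 H)) ≫ (𝟙 H ⊗ₘ (α_ H H H).hom) ≫
      (α_ H H (H ⊗ H)).inv ≫ (mul ⊗ₘ mul)
  counit_mul : mul ≫ counit = (counit ⊗ₘ counit) ≫ (λ_ (𝟙_ C)).hom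
  comul_unit : unit ≫ comul = (λ_ (𝟙_ C)).inv ≫ (unit ⊗ₘ unit)
  counit_unit : unit ≫ counit = 𝟙 (𝟙_ C)
  antipode_left : comul ≫ (antipode ⊗ₘ 𝟙 H) ≫ mul = counit ≫ unit
  antipode_right : comul ≫ (𝟙 H ⊗ₘ antipode) ≫ mul = counit ≫ unit

variable {C : Type u} [Category.{v} C] [MonoidalCategory C] [BraidedCategory C]

/-- The left adjoint action `ad = μ ∘ (μ ⊗ S) ∘ (id ⊗ c) ∘ (Δ ⊗ id)` of a braided
Hopf algebra on itself. -/
def adAction (A : BraidedHopfAlgebra C) : A.H ⊗ A.H ⟶ A.H :=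
  (A.comul ⊗ₘ 𝟙 A.H) ≫ (α_ A.H A.H A.H).hom ≫ (𝟙 A.H ⊗ₘ (β_ A.H A.H).hom) ≫
    (α_ A.H A.H A.H).inv ≫ (A.mul ⊗ₘ A.antipode) ≫ A.mul


namespace BraidedHopfAlgebraProof

noncomputable section

variable (A : BraidedHopfAlgebra C)

def toMon (A : BraidedHopfAlgebra C) : MonObj A.H where
  one := A.unit
  mul := A.mul
  one_mul := by simpa using A.unit_left
  mul_one := by simpa using A.unit_right
  mul_assoc := by simpa using A.mul_assoc

def toBimon (A : BraidedHopfAlgebra C) : BimonObj A.H :=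
  letI := toMon A
  { counit := A.counit
    comul := A.comul
    counit_comul := by simpa using A.counit_left
    comul_counit := by simpa using A.counit_right
    comul_assoc := by
      have h := A.comul_coassoc
      simp only [tensorHom_id, id_tensorHom] at h
      rw [reassoc_of% h]; simp
    mul_comul := by
      have hm : (MonObj.mul : A.H ⊗ A.H ⟶ A.H) = A.mul := rfl
      have ho : (MonObj.one : 𝟙_ C ⟶ A.H) = A.unit := rfl
      simpa [hm, toMon, tensorμ, tensorHom_id, id_tensorHom] using A.mul_comul
    one_comul := by
      have hm : (MonObj.mul : A.H ⊗ A.H ⟶ A.H) = A.mul := rfl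
      have ho : (MonObj.one : 𝟙_ C ⟶ A.H) = A.unit := rfl
      simpa [ho, MonObj.tensorObj.one_def] using A.comul_unit
    mul_counit := by
      have hm : (MonObj.mul : A.H ⊗ A.H ⟶ A.H) = A.mul := rfl
      have ho : (MonObj.one : 𝟙_ C ⟶ A.H) = A.unit := rfl
      simpa [hm] using A.counit_mul
    one_counit := by
      have hm : (MonObj.mul : A.H ⊗ A.H ⟶ A.H) = A.mul := rfl
      have ho : (MonObj.one : 𝟙_ C ⟶ A.H) = A.unit := rfl
      simpa [ho] using A.counit_unit }

def toHopf (A : BraidedHopfAlgebra C) : HopfObj A.H :=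
  letI := toBimon A
  { antipode := A.antipode
    antipode_left := by
      have h := A.antipode_left
      simp only [tensorHom_id] at h
      exact h
    antipode_right := by
      have h := A.antipode_right
      simp only [id_tensorHom] at h
      exact h }

theorem mulS (A : BraidedHopfAlgebra C) :
    A.mul ≫ A.antipode =
      (A.antipode ⊗ₘ A.antipode) ≫ (β_ A.H A.H).hom ≫ A.mul := by
  letI := toHopf A
  exact HopfObj.mul_antipode A.H

end

section Abstract

open BraidedCategory

variable {H : C} (d : H ⟶ H ⊗ H) (m : H ⊗ H ⟶ H) (s : H ⟶ H) (e : H ⟶ 𝟙_ C)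
  (u : 𝟙_ C ⟶ H)

theorem step12
    (coassoc : d ≫ (d ▷ H) = d ≫ (H ◁ d) ≫ (α_ H H H).inv)
    (massoc : (m ▷ H) ≫ m = (α_ H H H).hom ≫ (H ◁ m) ≫ m)
    (unitl : (u ▷ H) ≫ m = (λ_ H).hom)
    (counitl : d ≫ (e ▷ H) = (λ_ H).inv)
    (antr : d ≫ (H ◁ s) ≫ m = e ≫ u)
    (φ : H ⊗ H ⟶ H) :
    φ ≫ s =
      (d ▷ H) ≫ (α_ H H H).hom ≫
        (H ◁ ((d ▷ H) ≫ (α_ H H H).hom ≫ (H ◁ φ) ≫ (s ⊗ₘ s) ≫ m)) ≫ m := by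
  symm
  rw [MonoidalCategory.tensorHom_def]
  simp only [MonoidalCategory.whiskerLeft_comp, Category.assoc]
  slice_lhs 5 6 => rw [← MonoidalCategory.whiskerLeft_comp, whisker_exchange,
    MonoidalCategory.whiskerLeft_comp]
  slice_lhs 4 5 => rw [← MonoidalCategory.whiskerLeft_comp, ← associator_naturality_left,
    MonoidalCategory.whiskerLeft_comp]
  slice_lhs 3 4 => rw [← MonoidalCategory.whiskerLeft_comp, ← comp_whiskerRight]
  slice_lhs 5 6 => rw [← MonoidalCategory.whiskerLeft_comp, ← MonoidalCategory.whiskerLeft_comp]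
  have massoc' : (H ◁ m) ≫ m = (α_ H H H).inv ≫ (m ▷ H) ≫ m := by
    rw [massoc]; simp
  slice_lhs 6 7 => rw [massoc']
  slice_lhs 5 6 => rw [associator_inv_naturality_right]
  slice_lhs 6 7 => rw [whisker_exchange]
  slice_lhs 2 3 => rw [← associator_naturality_middle]
  slice_lhs 1 2 => rw [← comp_whiskerRight]
  rw [show d ≫ H ◁ (d ≫ s ▷ H) = d ≫ (d ▷ H) ≫ (α_ H H H).hom ≫ H ◁ (s ▷ H) from by
    rw [MonoidalCategory.whiskerLeft_comp, reassoc_of% coassoc]; simp]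
  simp only [comp_whiskerRight, Category.assoc]
  have nat1 : ((H ◁ (s ▷ H)) ▷ H) ≫ (α_ H (H ⊗ H) H).hom ≫ H ◁ (α_ H H H).hom ≫
      (α_ H H (H ⊗ H)).inv =
      (α_ H (H ⊗ H) H).hom ≫ H ◁ (α_ H H H).hom ≫ (α_ H H (H ⊗ H)).inv ≫
        ((H ◁ s) ▷ (H ⊗ H)) := by monoidal
  slice_lhs 4 7 => rw [nat1]
  slice_lhs 7 8 => rw [← comp_whiskerRight]
  have nat2 : (α_ H H H).hom ▷ H ≫ (α_ H (H ⊗ H) H).hom ≫ H ◁ (α_ H H H).hom ≫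
      (α_ H H (H ⊗ H)).inv = (α_ (H ⊗ H) H H).hom := by monoidal
  slice_lhs 3 6 => rw [nat2]
  slice_lhs 2 3 => rw [associator_naturality_left]
  slice_lhs 3 4 => rw [← comp_whiskerRight]
  rw [show d ≫ (H ◁ s ≫ m) = e ≫ u from by rw [← antr]]
  simp only [comp_whiskerRight, Category.assoc]
  slice_lhs 4 5 => rw [← whisker_exchange]
  slice_lhs 5 6 => rw [unitl]
  slice_lhs 2 3 => rw [← associator_naturality_left]
  slice_lhs 1 2 => rw [← comp_whiskerRight, counitl]
  simp only [Category.assoc]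
  rw [leftUnitor_naturality]
  simp

theorem claimB
    (coassoc : d ≫ (d ▷ H) = d ≫ (H ◁ d) ≫ (α_ H H H).inv)
    (massoc : (m ▷ H) ≫ m = (α_ H H H).hom ≫ (H ◁ m) ≫ m)
    (unitr : (H ◁ u) ≫ m = (ρ_ H).hom)
    (counitr : d ≫ (H ◁ e) = (ρ_ H).inv)
    (antl : d ≫ (s ▷ H) ≫ m = e ≫ u) :
    (d ▷ H) ≫ (α_ H H H).hom ≫ (H ◁ (β_ H H).hom) ≫ (α_ H H H).inv ≫
      (((d ▷ H) ≫ (α_ H H H).hom ≫ (H ◁ (β_ H H).hom) ≫ (α_ H H H).inv ≫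
        (m ▷ H) ≫ (H ◁ s) ≫ m) ▷ H) ≫ m = m := by
  simp only [comp_whiskerRight, Category.assoc]
  slice_lhs 11 12 => rw [massoc]
  slice_lhs 10 11 => rw [associator_naturality_middle]
  slice_lhs 9 10 => rw [associator_naturality_left]
  slice_lhs 11 12 => rw [← MonoidalCategory.whiskerLeft_comp]
  slice_lhs 10 11 => rw [← whisker_exchange]
  slice_lhs 4 5 => rw [← associator_inv_naturality_left]
  slice_lhs 3 4 => rw [whisker_exchange]
  slice_lhs 2 3 => rw [← associator_naturality_left]
  slice_lhs 1 2 => rw [← comp_whiskerRight, coassoc]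
  have mseg : (α_ H H H).inv ▷ H ≫ (α_ (H ⊗ H) H H).hom ≫ (H ⊗ H) ◁ (β_ H H).hom ≫
      (α_ (H ⊗ H) H H).inv ≫ (α_ H H H).hom ▷ H ≫ (H ◁ (β_ H H).hom) ▷ H ≫
      (α_ H H H).inv ▷ H ≫ (α_ (H ⊗ H) H H).hom =
      (α_ H (H ⊗ H) H).hom ≫ H ◁ (β_ (H ⊗ H) H).hom ≫ (α_ H H (H ⊗ H)).inv := by
    rw [braiding_tensor_left_hom]; monoidal
  simp only [comp_whiskerRight, Category.assoc]
  slice_lhs 3 10 => rw [mseg]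
  simp only [Category.assoc]
  slice_lhs 5 6 => rw [← associator_inv_naturality_right]
  slice_lhs 4 5 => rw [← MonoidalCategory.whiskerLeft_comp, ← braiding_naturality_left,
    MonoidalCategory.whiskerLeft_comp]
  slice_lhs 3 4 => rw [← associator_naturality_middle]
  slice_lhs 2 3 => rw [← comp_whiskerRight, ← MonoidalCategory.whiskerLeft_comp, antl]
  simp only [MonoidalCategory.whiskerLeft_comp, comp_whiskerRight, Category.assoc]
  slice_lhs 1 2 => rw [← comp_whiskerRight, counitr]
  slice_lhs 2 3 => rw [associator_naturality_middle]
  slice_lhs 3 4 => rw [← MonoidalCategory.whiskerLeft_comp, braiding_naturality_left,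
    MonoidalCategory.whiskerLeft_comp]
  slice_lhs 4 5 => rw [associator_inv_naturality_right]
  slice_lhs 5 6 => rw [whisker_exchange]
  slice_lhs 6 7 => rw [unitr]
  rw [rightUnitor_naturality]
  simp

theorem step5 (massoc : (m ▷ H) ≫ m = (α_ H H H).hom ≫ (H ◁ m) ≫ m) :
    (d ▷ H) ≫ (α_ H H H).hom ≫ (H ◁ ((s ⊗ₘ s) ≫ (β_ H H).hom ≫ m)) ≫ m =
      (H ◁ s) ≫ (d ▷ H) ≫ (α_ H H H).hom ≫ (H ◁ (β_ H H).hom) ≫ (α_ H H H).inv ≫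
        (m ▷ H) ≫ (H ◁ s) ≫ m := by
  slice_rhs 1 2 => rw [whisker_exchange]
  slice_rhs 2 3 => rw [associator_naturality_right]
  slice_rhs 3 4 => rw [← MonoidalCategory.whiskerLeft_comp, braiding_naturality_right,
    MonoidalCategory.whiskerLeft_comp]
  slice_rhs 6 7 => rw [← whisker_exchange]
  slice_rhs 5 6 => rw [← associator_inv_naturality_right]
  slice_rhs 7 8 => rw [massoc]
  slice_rhs 6 7 => rw [Iso.inv_hom_id]
  rw [braiding_naturality_assoc]
  simp only [MonoidalCategory.tensorHom_def, MonoidalCategory.whiskerLeft_comp, Category.assoc,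
    Category.id_comp]

end Abstract

end BraidedHopfAlgebraProof

open BraidedHopfAlgebraProof in
/-- If the left adjoint action is braided cocommutative, it intertwines the
antipode: `S ∘ ad = ad ∘ (id ⊗ S)`. -/
theorem adAction_antipode (A : BraidedHopfAlgebra C) [IsIso A.antipode]
    (hcc : (A.comul ⊗ₘ 𝟙 A.H) ≫ (α_ A.H A.H A.H).hom ≫
      (𝟙 A.H ⊗ₘ (β_ A.H A.H).hom) ≫ (α_ A.H A.H A.H).inv ≫ (adAction A ⊗ₘ 𝟙 A.H) =
      (A.comul ⊗ₘ 𝟙 A.H) ≫ (α_ A.H A.H A.H).hom ≫ (𝟙 A.H ⊗ₘ adAction A) ≫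
        (β_ A.H A.H).inv) :
    adAction A ≫ A.antipode = (𝟙 A.H ⊗ₘ A.antipode) ≫ adAction A := by
  set H := A.H
  set d := A.comul
  set m := A.mul
  set s := A.antipode
  set e := A.counit
  set u := A.unit
  have adW_eq : adAction A =
      (d ▷ H) ≫ (α_ H H H).hom ≫ (H ◁ (β_ H H).hom) ≫ (α_ H H H).inv ≫
        (m ▷ H) ≫ (H ◁ s) ≫ m := by
    simp only [adAction, tensorHom_id, id_tensorHom, MonoidalCategory.tensorHom_def,
      MonoidalCategory.whiskerLeft_id, MonoidalCategory.id_whiskerRight,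
      Category.id_comp, Category.comp_id, Category.assoc]
    rfl
  have wcoassoc : d ≫ (d ▷ H) = d ≫ (H ◁ d) ≫ (α_ H H H).inv := by
    simpa using A.comul_coassoc
  have wcounitl : d ≫ (e ▷ H) = (λ_ H).inv := by simpa using A.counit_left
  have wcounitr : d ≫ (H ◁ e) = (ρ_ H).inv := by simpa using A.counit_right
  have wmassoc : (m ▷ H) ≫ m = (α_ H H H).hom ≫ (H ◁ m) ≫ m := by
    simpa using A.mul_assoc
  have wunitl : (u ▷ H) ≫ m = (λ_ H).hom := by simpa using A.unit_left
  have wunitr : (H ◁ u) ≫ m = (ρ_ H).hom := by simpa using A.unit_right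
  have wantl : d ≫ (s ▷ H) ≫ m = e ≫ u := by simpa using A.antipode_left
  have wantr : d ≫ (H ◁ s) ≫ m = e ≫ u := by simpa using A.antipode_right
  have SS : m ≫ s = (s ⊗ₘ s) ≫ (β_ H H).hom ≫ m := mulS A
  have whcc : (d ▷ H) ≫ (α_ H H H).hom ≫ (H ◁ (β_ H H).hom) ≫ (α_ H H H).inv ≫
      (adAction A ▷ H) =
      (d ▷ H) ≫ (α_ H H H).hom ≫ (H ◁ adAction A) ≫ (β_ H H).inv := by
    simpa only [tensorHom_id, id_tensorHom] using hcc
  have SS' : (s ⊗ₘ s) ≫ m = (β_ H H).inv ≫ m ≫ s := by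
    rw [← cancel_epi (β_ H H).hom, Iso.hom_inv_id_assoc,
      ← BraidedCategory.braiding_naturality_assoc, ← SS]
  have e1 := step12 d m s e u wcoassoc wmassoc wunitl wcounitl wantr (adAction A)
  have e2 : (d ▷ H) ≫ (α_ H H H).hom ≫ (H ◁ adAction A) ≫ (s ⊗ₘ s) ≫ m = m ≫ s := by
    rw [SS']
    rw [← reassoc_of% whcc]
    rw [adW_eq]
    rw [reassoc_of% (claimB d m s e u wcoassoc wmassoc wunitr wcounitr wantl)]
  rw [e1]
  rw [show H ◁ ((d ▷ H) ≫ (α_ H H H).hom ≫ (H ◁ adAction A) ≫ (s ⊗ₘ s) ≫ m)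
      = H ◁ (m ≫ s) from by rw [← e2]]
  rw [SS]
  rw [id_tensorHom, adW_eq]
  exact step5 d m s wmassoc
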